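/- arXiv:1911.03942 — 2 statements merged into one kernel-verified Lean document; each statement's English description precedes it below -/
import Mathlib

section
/- Let n, m, l be natural numbers with n + m + l odd. Then I_{n,m,l,1} = −(n+m−l−2)‼ · (n−m+l−2)‼ · (−n+m+l−2)‼ · (n² + m² + l² − 2nm − 2nl − 2ml), where the three double-factorial arguments are odd integers (possibly negative) and ‼ denotes the extended double factorial. -/
open MeasureTheory Real Polynomial Filter

/-- Physicists' Hermite polynomials: `H 0 x = 1`, `H 1 x = 2x`,
`H (n+1) x = 2x * H n x - 2n * H (n-1) x`. -/
noncomputable def hermiteP : ℕ → ℝ → ℝ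
  | 0, _ => 1
  | 1, x => 2 * x
  | n + 2, x => 2 * x * hermiteP (n + 1) x - 2 * ((n : ℝ) + 1) * hermiteP n x

/-- Extended double factorial of an odd integer `a`:
`a‼ = 2^((a+1)/2) * Γ(a/2 + 1) / √π`. -/
noncomputable def ddfact (a : ℤ) : ℝ :=
  (2 : ℝ) ^ ((a + 1) / 2) * Real.Gamma ((a : ℝ) / 2 + 1) / Real.sqrt π

/-- `I n m l k = √(2/π) ∫ H_n(x) H_m(x) H_l(x) H_k(x) e^{-2x²} dx`. -/
noncomputable def I (n m l k : ℕ) : ℝ :=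
  Real.sqrt (2 / π) *
    ∫ x : ℝ,
      hermiteP n x * hermiteP m x * hermiteP l x * hermiteP k x * Real.exp (-2 * x ^ 2)


noncomputable def Jraw (a b c : ℕ) : ℝ :=
  ∫ x : ℝ, hermiteP a x * hermiteP b x * hermiteP c x * Real.exp (-2 * x ^ 2)

noncomputable def Dz (a b c : ℤ) : ℝ :=
  ddfact (a + b - c - 1) * ddfact (a - b + c - 1) * ddfact (-a + b + c - 1)

lemma hermiteP_zero (x : ℝ) : hermiteP 0 x = 1 := rfl
lemma hermiteP_one (x : ℝ) : hermiteP 1 x = 2 * x := rfl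
lemma hermiteP_add_two (n : ℕ) (x : ℝ) :
    hermiteP (n + 2) x = 2 * x * hermiteP (n + 1) x - 2 * ((n : ℝ) + 1) * hermiteP n x := rfl

lemma hermiteP_succ (n : ℕ) (x : ℝ) :
    hermiteP (n + 1) x = 2 * x * hermiteP n x - 2 * (n : ℝ) * hermiteP (n - 1) x := by
  cases n with
  | zero => simp [hermiteP_zero, hermiteP_one]
  | succ k => simpa using hermiteP_add_two k x

lemma hermiteP_isPoly (n : ℕ) : ∃ p : ℝ[X], ∀ x, hermiteP n x = p.eval x := by
  induction n using Nat.strong_induction_on with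
  | _ n ih =>
    match n with
    | 0 => exact ⟨1, by simp [hermiteP_zero]⟩
    | 1 => exact ⟨Polynomial.C 2 * Polynomial.X, by simp [hermiteP_one]⟩
    | n + 2 =>
      obtain ⟨p, hp⟩ := ih (n + 1) (by omega)
      obtain ⟨q, hq⟩ := ih n (by omega)
      exact ⟨Polynomial.C 2 * Polynomial.X * p - Polynomial.C (2 * ((n : ℝ) + 1)) * q,
        fun x => by simp [hermiteP_add_two, hp, hq]⟩

lemma hermiteP_hasDerivAt (n : ℕ) (x : ℝ) :
    HasDerivAt (hermiteP n) (2 * (n : ℝ) * hermiteP (n - 1) x) x := by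
  induction n using Nat.strong_induction_on generalizing x with
  | _ n ih =>
    match n with
    | 0 => simpa [hermiteP_zero, show hermiteP 0 = fun _ => (1:ℝ) from funext hermiteP_zero] using (hasDerivAt_const x (1 : ℝ))
    | 1 => simpa [hermiteP_zero, hermiteP_one, show hermiteP 1 = fun y => 2 * y from funext hermiteP_one] using ((hasDerivAt_id x).const_mul (2 : ℝ))
    | n + 2 =>
      have h1 : HasDerivAt (hermiteP (n + 1)) (2 * ((n : ℝ) + 1) * hermiteP n x) x := by
        simpa using ih (n + 1) (by omega) x
      have h2 : HasDerivAt (hermiteP n) (2 * (n : ℝ) * hermiteP (n - 1) x) x :=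
        ih n (by omega) x
      have hx : HasDerivAt (fun y : ℝ => 2 * y * hermiteP (n + 1) y
          - 2 * ((n : ℝ) + 1) * hermiteP n y)
          (2 * hermiteP (n + 1) x + 2 * x * (2 * ((n : ℝ) + 1) * hermiteP n x)
            - 2 * ((n : ℝ) + 1) * (2 * (n : ℝ) * hermiteP (n - 1) x)) x := by
        exact ((((hasDerivAt_id x).const_mul (2:ℝ)).mul h1).sub (h2.const_mul _)).congr_deriv
          (by simp only [id_eq]; ring)
      have hfun : (fun y : ℝ => 2 * y * hermiteP (n + 1) y - 2 * ((n : ℝ) + 1) * hermiteP n y)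
          = hermiteP (n + 2) := by funext y; rw [hermiteP_add_two]
      rw [hfun] at hx
      convert hx using 1
      have he : n + 2 - 1 = n + 1 := rfl
      rw [he, hermiteP_succ n x]
      push_cast
      ring

lemma hermiteP_neg (n : ℕ) (x : ℝ) : hermiteP n (-x) = (-1) ^ n * hermiteP n x := by
  induction n using Nat.strong_induction_on generalizing x with
  | _ n ih =>
    match n with
    | 0 => simp [hermiteP_zero]
    | 1 => simp [hermiteP_one]
    | n + 2 =>
      rw [hermiteP_add_two, hermiteP_add_two, ih (n+1) (by omega), ih n (by omega)]
      ring

lemma integrable_pow_gauss (n : ℕ) :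
    Integrable (fun x : ℝ => x ^ n * Real.exp (-2 * x ^ 2)) := by
  have h := integrable_rpow_mul_exp_neg_mul_sq (b := 2) (by norm_num) (s := (n : ℝ))
    (by exact lt_of_lt_of_le neg_one_lt_zero (by positivity))
  simpa [Real.rpow_natCast] using h

lemma integrable_poly_gauss (p : ℝ[X]) :
    Integrable (fun x : ℝ => p.eval x * Real.exp (-2 * x ^ 2)) := by
  have : (fun x : ℝ => p.eval x * Real.exp (-2 * x ^ 2)) =
      fun x : ℝ => ∑ i ∈ Finset.range (p.natDegree + 1),
        p.coeff i * (x ^ i * Real.exp (-2 * x ^ 2)) := by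
    funext x
    rw [Polynomial.eval_eq_sum_range, Finset.sum_mul]
    simp [mul_assoc]
  rw [this]
  exact integrable_finset_sum _ fun i _ => (integrable_pow_gauss i).const_mul _

lemma integrable_of_eq_poly {f : ℝ → ℝ} (h : ∃ p : ℝ[X], ∀ x, f x = p.eval x) :
    Integrable (fun x : ℝ => f x * Real.exp (-2 * x ^ 2)) := by
  obtain ⟨p, hp⟩ := h
  have : (fun x : ℝ => f x * Real.exp (-2 * x ^ 2)) =
      fun x : ℝ => p.eval x * Real.exp (-2 * x ^ 2) := funext fun x => by rw [hp]
  rw [this]; exact integrable_poly_gauss p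

lemma ibp (f f' : ℝ → ℝ) (hd : ∀ x, HasDerivAt f (f' x) x)
    (hf : ∃ p : ℝ[X], ∀ x, f x = p.eval x) (hf' : ∃ p : ℝ[X], ∀ x, f' x = p.eval x) :
    ∫ x : ℝ, (f' x - 4 * x * f x) * Real.exp (-2 * x ^ 2) = 0 := by
  obtain ⟨p, hp⟩ := hf
  obtain ⟨q, hq⟩ := hf'
  have hg : ∀ x : ℝ, HasDerivAt (fun y => f y * Real.exp (-2 * y ^ 2))
      ((f' x - 4 * x * f x) * Real.exp (-2 * x ^ 2)) x := by
    intro x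
    have h1 : HasDerivAt (fun y : ℝ => -2 * y ^ 2) (-4 * x) x :=
      ((hasDerivAt_pow 2 x).const_mul (-2 : ℝ)).congr_deriv (by ring)
    have hexp : HasDerivAt (fun y : ℝ => Real.exp (-2 * y ^ 2))
        (Real.exp (-2 * x ^ 2) * (-4 * x)) x := h1.exp
    exact ((hd x).mul hexp).congr_deriv (by ring)
  refine integral_eq_zero_of_hasDerivAt_of_integrable hg ?_ ?_
  · exact integrable_of_eq_poly ⟨q - Polynomial.C 4 * Polynomial.X * p,
      fun x => by simp [hq, hp]⟩
  · exact integrable_of_eq_poly ⟨p, hp⟩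

lemma isPoly3 (a b c : ℕ) :
    ∃ p : ℝ[X], ∀ x, hermiteP a x * hermiteP b x * hermiteP c x = p.eval x := by
  obtain ⟨p, hp⟩ := hermiteP_isPoly a
  obtain ⟨q, hq⟩ := hermiteP_isPoly b
  obtain ⟨r, hr⟩ := hermiteP_isPoly c
  exact ⟨p * q * r, fun x => by simp [hp, hq, hr]⟩

lemma integrable3 (a b c : ℕ) :
    Integrable (fun x : ℝ =>
      hermiteP a x * hermiteP b x * hermiteP c x * Real.exp (-2 * x ^ 2)) :=
  integrable_of_eq_poly (isPoly3 a b c)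

lemma key_raw (a b c : ℕ) :
    ∫ x : ℝ, 2 * x * (hermiteP a x * hermiteP b x * hermiteP c x) * Real.exp (-2 * x ^ 2)
      = a * Jraw (a - 1) b c + b * Jraw a (b - 1) c + c * Jraw a b (c - 1) := by
  set f : ℝ → ℝ := fun x => hermiteP a x * hermiteP b x * hermiteP c x with hf_def
  set f' : ℝ → ℝ := fun x =>
      2 * a * hermiteP (a - 1) x * hermiteP b x * hermiteP c x
    + 2 * b * hermiteP a x * hermiteP (b - 1) x * hermiteP c x
    + 2 * c * hermiteP a x * hermiteP b x * hermiteP (c - 1) x with hf'_def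
  have hd : ∀ x, HasDerivAt f (f' x) x := by
    intro x
    exact (((hermiteP_hasDerivAt a x).mul (hermiteP_hasDerivAt b x)).mul
      (hermiteP_hasDerivAt c x)).congr_deriv (by simp only [hf'_def, Pi.mul_apply]; ring)
  have hfp : ∃ p : ℝ[X], ∀ x, f x = p.eval x := isPoly3 a b c
  have hf'p : ∃ p : ℝ[X], ∀ x, f' x = p.eval x := by
    obtain ⟨p1, hp1⟩ := hermiteP_isPoly (a - 1)
    obtain ⟨p2, hp2⟩ := hermiteP_isPoly (b - 1)
    obtain ⟨p3, hp3⟩ := hermiteP_isPoly (c - 1)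
    obtain ⟨pa, hpa⟩ := hermiteP_isPoly a
    obtain ⟨pb, hpb⟩ := hermiteP_isPoly b
    obtain ⟨pc, hpc⟩ := hermiteP_isPoly c
    refine ⟨Polynomial.C (2 * (a : ℝ)) * p1 * pb * pc
      + Polynomial.C (2 * (b : ℝ)) * pa * p2 * pc
      + Polynomial.C (2 * (c : ℝ)) * pa * pb * p3, fun x => ?_⟩
    simp [hf'_def, hp1, hp2, hp3, hpa, hpb, hpc]
  have h0 := ibp f f' hd hfp hf'p
  have hsplit : (fun x : ℝ => (f' x - 4 * x * f x) * Real.exp (-2 * x ^ 2))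
      = fun x : ℝ => f' x * Real.exp (-2 * x ^ 2)
        - 2 * (2 * x * f x * Real.exp (-2 * x ^ 2)) := by
    funext x; ring
  have hint1 : Integrable (fun x : ℝ => f' x * Real.exp (-2 * x ^ 2)) :=
    integrable_of_eq_poly hf'p
  have hint2 : Integrable (fun x : ℝ => 2 * x * f x * Real.exp (-2 * x ^ 2)) := by
    refine integrable_of_eq_poly ?_
    obtain ⟨p, hp⟩ := hfp
    exact ⟨Polynomial.C 2 * Polynomial.X * p, fun x => by simp [hp]⟩
  rw [hsplit] at h0
  rw [integral_sub hint1 (hint2.const_mul 2), integral_const_mul, sub_eq_zero] at h0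
  -- now ∫ f' e = 2 * ∫ 2x f e
  have hsum : (fun x : ℝ => f' x * Real.exp (-2 * x ^ 2))
      = fun x : ℝ =>
        2 * a * (hermiteP (a-1) x * hermiteP b x * hermiteP c x * Real.exp (-2 * x ^ 2))
      + (2 * b * (hermiteP a x * hermiteP (b-1) x * hermiteP c x * Real.exp (-2 * x ^ 2))
      + 2 * c * (hermiteP a x * hermiteP b x * hermiteP (c-1) x * Real.exp (-2 * x ^ 2))) := by
    funext x; simp only [hf'_def]; ring
  rw [hsum] at h0
  have ia : Integrable (fun x : ℝ => 2 * (a:ℝ) *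
      (hermiteP (a-1) x * hermiteP b x * hermiteP c x * Real.exp (-2 * x ^ 2))) :=
    (integrable3 _ _ _).const_mul _
  have ib : Integrable (fun x : ℝ => 2 * (b:ℝ) *
      (hermiteP a x * hermiteP (b-1) x * hermiteP c x * Real.exp (-2 * x ^ 2))) :=
    (integrable3 _ _ _).const_mul _
  have ic : Integrable (fun x : ℝ => 2 * (c:ℝ) *
      (hermiteP a x * hermiteP b x * hermiteP (c-1) x * Real.exp (-2 * x ^ 2))) :=
    (integrable3 _ _ _).const_mul _
  have hIsum : (∫ x : ℝ,
        (2 * (a:ℝ) * (hermiteP (a-1) x * hermiteP b x * hermiteP c x * Real.exp (-2 * x ^ 2))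
      + (2 * (b:ℝ) * (hermiteP a x * hermiteP (b-1) x * hermiteP c x * Real.exp (-2 * x ^ 2))
      + 2 * (c:ℝ) * (hermiteP a x * hermiteP b x * hermiteP (c-1) x * Real.exp (-2 * x ^ 2)))))
      = 2 * (a:ℝ) * Jraw (a-1) b c + (2 * (b:ℝ) * Jraw a (b-1) c + 2 * (c:ℝ) * Jraw a b (c-1)) := by
    have ibc : Integrable (fun x : ℝ =>
        2 * (b:ℝ) * (hermiteP a x * hermiteP (b-1) x * hermiteP c x * Real.exp (-2 * x ^ 2))
      + 2 * (c:ℝ) * (hermiteP a x * hermiteP b x * hermiteP (c-1) x * Real.exp (-2 * x ^ 2))) :=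
      ib.add ic
    rw [integral_add ia ibc, integral_add ib ic,
      integral_const_mul, integral_const_mul, integral_const_mul]
    rfl
  rw [hIsum] at h0
  have hfun2 : (fun x : ℝ => 2 * x * (hermiteP a x * hermiteP b x * hermiteP c x)
      * Real.exp (-2 * x ^ 2)) = fun x => 2 * x * f x * Real.exp (-2 * x ^ 2) := by
    funext x; simp only [hf_def]
  rw [hfun2]
  linarith [h0]

lemma Jraw_succ (a b c : ℕ) :
    Jraw (a + 1) b c
      = -(a : ℝ) * Jraw (a - 1) b c + b * Jraw a (b - 1) c + c * Jraw a b (c - 1) := by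
  have hfun : (fun x : ℝ => hermiteP (a+1) x * hermiteP b x * hermiteP c x
        * Real.exp (-2 * x ^ 2))
      = fun x : ℝ => 2 * x * (hermiteP a x * hermiteP b x * hermiteP c x)
          * Real.exp (-2 * x ^ 2)
        - 2 * (a:ℝ) * (hermiteP (a-1) x * hermiteP b x * hermiteP c x
          * Real.exp (-2 * x ^ 2)) := by
    funext x
    rw [hermiteP_succ a x]
    ring
  have hint1 : Integrable (fun x : ℝ => 2 * x * (hermiteP a x * hermiteP b x * hermiteP c x)
      * Real.exp (-2 * x ^ 2)) := by
    apply integrable_of_eq_poly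
    obtain ⟨p, hp⟩ := isPoly3 a b c
    exact ⟨Polynomial.C 2 * Polynomial.X * p, fun x => by simp [hp]⟩
  have hint2 : Integrable (fun x : ℝ => 2 * (a:ℝ) *
      (hermiteP (a-1) x * hermiteP b x * hermiteP c x * Real.exp (-2 * x ^ 2))) :=
    (integrable3 _ _ _).const_mul _
  unfold Jraw
  rw [hfun, integral_sub hint1 hint2, integral_const_mul, key_raw]
  have e1 : Jraw (a-1) b c = ∫ x : ℝ, hermiteP (a-1) x * hermiteP b x * hermiteP c x
      * Real.exp (-2 * x ^ 2) := rfl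
  have e2 : Jraw a (b-1) c = ∫ x : ℝ, hermiteP a x * hermiteP (b-1) x * hermiteP c x
      * Real.exp (-2 * x ^ 2) := rfl
  have e3 : Jraw a b (c-1) = ∫ x : ℝ, hermiteP a x * hermiteP b x * hermiteP (c-1) x
      * Real.exp (-2 * x ^ 2) := rfl
  rw [← e1, ← e2, ← e3]
  ring

lemma Jraw_comm1 (a b c : ℕ) : Jraw a b c = Jraw b a c := by
  unfold Jraw
  congr 1
  funext x
  ring

lemma Jraw_comm2 (a b c : ℕ) : Jraw a b c = Jraw a c b := by
  unfold Jraw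
  congr 1
  funext x
  ring

lemma Jraw_odd {a b c : ℕ} (h : Odd (a + b + c)) : Jraw a b c = 0 := by
  have hneg := integral_neg_eq_self (fun x : ℝ => hermiteP a x * hermiteP b x * hermiteP c x
      * Real.exp (-2 * x ^ 2)) volume
  have : (fun x : ℝ => hermiteP a (-x) * hermiteP b (-x) * hermiteP c (-x)
      * Real.exp (-2 * (-x) ^ 2)) = fun x : ℝ => -(hermiteP a x * hermiteP b x * hermiteP c x
      * Real.exp (-2 * x ^ 2)) := by
    funext x
    rw [hermiteP_neg, hermiteP_neg, hermiteP_neg]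
    rw [show (-1:ℝ)^a * hermiteP a x * ((-1:ℝ)^b * hermiteP b x) * ((-1:ℝ)^c * hermiteP c x)
      = (-1:ℝ)^(a+b+c) * (hermiteP a x * hermiteP b x * hermiteP c x) by rw [pow_add, pow_add]; ring]
    rw [Odd.neg_one_pow h]
    ring_nf
  rw [this, integral_neg] at hneg
  have e0 : Jraw a b c = ∫ x : ℝ, hermiteP a x * hermiteP b x * hermiteP c x
      * Real.exp (-2 * x ^ 2) := rfl
  rw [← e0] at hneg
  linarith

lemma Jraw_zero : Jraw 0 0 0 = Real.sqrt (π / 2) := by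
  unfold Jraw
  simp only [hermiteP, one_mul]
  simpa using integral_gaussian 2

lemma ddfact_step {a : ℤ} (ha : Odd a) : ddfact a = a * ddfact (a - 2) := by
  obtain ⟨k, hk⟩ := ha
  have h1 : (a + 1) / 2 = k + 1 := by omega
  have h2 : (a - 2 + 1) / 2 = k := by omega
  have h3 : ((a : ℝ) / 2) ≠ 0 := by
    have : (a : ℝ) ≠ 0 := by
      exact_mod_cast (by omega : a ≠ 0)
    simpa using this
  have hG : Real.Gamma ((a : ℝ) / 2 + 1) = ((a : ℝ) / 2) * Real.Gamma ((a : ℝ) / 2) :=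
    Real.Gamma_add_one h3
  have hG2 : Real.Gamma (((a : ℤ) - 2 : ℤ) / 2 + 1 : ℝ) = Real.Gamma ((a : ℝ) / 2) := by
    norm_num
    ring_nf
  unfold ddfact
  rw [h1, h2, hG]
  push_cast
  rw [show ((a : ℝ) - 2) / 2 + 1 = (a : ℝ) / 2 by ring]
  rw [zpow_add_one₀ (by norm_num : (2:ℝ) ≠ 0)]
  ring

lemma ddfact_neg_one : ddfact (-1) = 1 := by
  unfold ddfact
  norm_num [Real.Gamma_one_half_eq]
  exact (by positivity : Real.sqrt π ≠ 0)


lemma Dz_zero : Dz 0 0 0 = 1 := by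
  unfold Dz
  norm_num [ddfact_neg_one]

lemma ddfact_ne_zero {a : ℤ} (ha : Odd a) : ddfact a ≠ 0 := by
  unfold ddfact
  apply div_ne_zero
  · apply mul_ne_zero (zpow_ne_zero _ (by norm_num))
    apply Real.Gamma_ne_zero
    intro m hm
    obtain ⟨k, hk⟩ := ha
    have : (a : ℝ) = 2 * k + 1 := by exact_mod_cast hk
    rw [this] at hm
    have : (k : ℝ) = -(m : ℝ) - 3/2 := by linarith
    have h2 : ((k : ℝ) + (m:ℝ)) = -3/2 := by linarith
    have h3 : ((k + (m:ℤ) : ℤ) : ℝ) = -3/2 := by push_cast; linarith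
    have h4 : ((2 * (k + (m:ℤ)) : ℤ) : ℝ) = -3 := by push_cast; linarith
    have h5 : (2 * (k + (m:ℤ)) : ℤ) = -3 := by exact_mod_cast h4
    omega
  · positivity

lemma Dz_step (a b c : ℤ) (h : Odd (a + b + c)) :
    Dz (a + 1) b c = -a * Dz (a - 1) b c + b * Dz a (b - 1) c + c * Dz a b (c - 1) := by
  have hp : Odd (a + b - c) := by
    obtain ⟨k, hk⟩ := h; exact ⟨k - c, by omega⟩
  have hq : Odd (a - b + c) := by
    obtain ⟨k, hk⟩ := h; exact ⟨k - b, by omega⟩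
  have hr : Odd (-a + b + c) := by
    obtain ⟨k, hk⟩ := h; exact ⟨k - a, by omega⟩
  have hrne : ((-a + b + c : ℤ) : ℝ) ≠ 0 := by
    exact_mod_cast (by obtain ⟨k, hk⟩ := hr; omega : (-a + b + c : ℤ) ≠ 0)
  unfold Dz
  rw [show a + 1 + b - c - 1 = a + b - c by ring, show a + 1 - b + c - 1 = a - b + c by ring,
    show -(a+1) + b + c - 1 = (-a + b + c) - 2 by ring,
    show a - 1 + b - c - 1 = (a + b - c) - 2 by ring,
    show a - 1 - b + c - 1 = (a - b + c) - 2 by ring,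
    show -(a-1) + b + c - 1 = -a + b + c by ring,
    show a + (b-1) - c - 1 = (a + b - c) - 2 by ring,
    show a - (b-1) + c - 1 = a - b + c by ring,
    show -a + (b-1) + c - 1 = (-a + b + c) - 2 by ring,
    show a + b - (c-1) - 1 = a + b - c by ring,
    show a - b + (c-1) - 1 = (a - b + c) - 2 by ring,
    show -a + b + (c-1) - 1 = (-a + b + c) - 2 by ring]
  rw [ddfact_step hp, ddfact_step hq, ddfact_step hr]
  push_cast
  ring

lemma Dz_comm1 (a b c : ℤ) : Dz a b c = Dz b a c := by
  unfold Dz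
  rw [show b + a - c - 1 = a + b - c - 1 by ring, show b - a + c - 1 = -a + b + c - 1 by ring,
    show -b + a + c - 1 = a - b + c - 1 by ring]
  ring

lemma Dz_comm2 (a b c : ℤ) : Dz a b c = Dz a c b := by
  unfold Dz
  rw [show a + c - b - 1 = a - b + c - 1 by ring, show a - c + b - 1 = a + b - c - 1 by ring,
    show -a + c + b - 1 = -a + b + c - 1 by ring]
  ring

lemma sqrt_two_pi_mul : Real.sqrt (2 / π) * Real.sqrt (π / 2) = 1 := by
  rw [← Real.sqrt_mul (by positivity)]
  rw [show 2 / π * (π / 2) = 1 by field_simp]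
  exact Real.sqrt_one

lemma J_step_aux (s : ℕ)
    (IH : ∀ t, t < s + 1 → ∀ a b c : ℕ, a + b + c = t →
      Real.sqrt (2 / π) * Jraw a b c = if Even t then Dz a b c else 0)
    (a b c : ℕ) (hsum : a + 1 + b + c = s + 1) :
    Real.sqrt (2 / π) * Jraw (a + 1) b c = if Even (s + 1) then Dz (a + 1) b c else 0 := by
  have hexp : Real.sqrt (2 / π) * Jraw (a + 1) b c
      = -((a:ℝ) * (Real.sqrt (2 / π) * Jraw (a - 1) b c))
        + (b:ℝ) * (Real.sqrt (2 / π) * Jraw a (b - 1) c)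
        + (c:ℝ) * (Real.sqrt (2 / π) * Jraw a b (c - 1)) := by
    rw [Jraw_succ]; ring
  by_cases he : Even (s + 1)
  · rw [if_pos he]
    have t1 : (a:ℝ) * (Real.sqrt (2 / π) * Jraw (a - 1) b c)
        = (a:ℝ) * Dz ((a:ℤ) - 1) b c := by
      cases a with
      | zero => simp
      | succ a' =>
        have ht := IH (a' + b + c) (by omega) a' b c rfl
        have hev : Even (a' + b + c) := by
          simp only [Nat.even_iff] at he ⊢; omega
        rw [if_pos hev] at ht
        have harg : ((a' + 1 : ℕ) : ℤ) - 1 = (a' : ℤ) := by push_cast; ring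
        rw [Nat.add_sub_cancel, ht, harg]
    have t2 : (b:ℝ) * (Real.sqrt (2 / π) * Jraw a (b - 1) c)
        = (b:ℝ) * Dz (a:ℤ) ((b:ℤ) - 1) c := by
      cases b with
      | zero => simp
      | succ b' =>
        have ht := IH (a + b' + c) (by omega) a b' c rfl
        have hev : Even (a + b' + c) := by
          simp only [Nat.even_iff] at he ⊢; omega
        rw [if_pos hev] at ht
        have harg : ((b' + 1 : ℕ) : ℤ) - 1 = (b' : ℤ) := by push_cast; ring
        rw [Nat.add_sub_cancel, ht, harg]
    have t3 : (c:ℝ) * (Real.sqrt (2 / π) * Jraw a b (c - 1))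
        = (c:ℝ) * Dz (a:ℤ) (b:ℤ) ((c:ℤ) - 1) := by
      cases c with
      | zero => simp
      | succ c' =>
        have ht := IH (a + b + c') (by omega) a b c' rfl
        have hev : Even (a + b + c') := by
          simp only [Nat.even_iff] at he ⊢; omega
        rw [if_pos hev] at ht
        have harg : ((c' + 1 : ℕ) : ℤ) - 1 = (c' : ℤ) := by push_cast; ring
        rw [Nat.add_sub_cancel, ht, harg]
    have hodd : Odd ((a:ℤ) + (b:ℤ) + (c:ℤ)) := by
      have : Odd (a + b + c) := by
        simp only [Nat.odd_iff]; simp only [Nat.even_iff] at he; omega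
      obtain ⟨k, hk⟩ := this
      exact ⟨(k : ℤ), by exact_mod_cast hk⟩
    have hstep := Dz_step (a:ℤ) (b:ℤ) (c:ℤ) hodd
    rw [hexp, t1, t2, t3]
    push_cast at hstep ⊢
    rw [hstep]
    ring
  · rw [if_neg he]
    have t1 : (a:ℝ) * (Real.sqrt (2 / π) * Jraw (a - 1) b c) = 0 := by
      cases a with
      | zero => simp
      | succ a' =>
        have ht := IH (a' + b + c) (by omega) a' b c rfl
        have hod : ¬ Even (a' + b + c) := by
          simp only [Nat.even_iff] at he ⊢; omega
        rw [if_neg hod] at ht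
        rw [Nat.add_sub_cancel, ht, mul_zero]
    have t2 : (b:ℝ) * (Real.sqrt (2 / π) * Jraw a (b - 1) c) = 0 := by
      cases b with
      | zero => simp
      | succ b' =>
        have ht := IH (a + b' + c) (by omega) a b' c rfl
        have hod : ¬ Even (a + b' + c) := by
          simp only [Nat.even_iff] at he ⊢; omega
        rw [if_neg hod] at ht
        rw [Nat.add_sub_cancel, ht, mul_zero]
    have t3 : (c:ℝ) * (Real.sqrt (2 / π) * Jraw a b (c - 1)) = 0 := by
      cases c with
      | zero => simp
      | succ c' =>
        have ht := IH (a + b + c') (by omega) a b c' rfl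
        have hod : ¬ Even (a + b + c') := by
          simp only [Nat.even_iff] at he ⊢; omega
        rw [if_neg hod] at ht
        rw [Nat.add_sub_cancel, ht, mul_zero]
    rw [hexp, t1, t2, t3]
    ring

lemma J_eq (s : ℕ) : ∀ a b c : ℕ, a + b + c = s →
    Real.sqrt (2 / π) * Jraw a b c = if Even s then Dz a b c else 0 := by
  induction s using Nat.strong_induction_on with
  | _ s IH =>
    intro a b c hsum
    match s, hsum with
    | 0, hsum =>
      have ha : a = 0 := by omega
      have hb : b = 0 := by omega
      have hc : c = 0 := by omega
      subst ha; subst hb; subst hc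
      rw [if_pos (by exact Even.zero), Jraw_zero, sqrt_two_pi_mul]
      exact Dz_zero.symm
    | s' + 1, hsum =>
      have IH' : ∀ t, t < s' + 1 → ∀ a b c : ℕ, a + b + c = t →
          Real.sqrt (2 / π) * Jraw a b c = if Even t then Dz a b c else 0 :=
        fun t ht => IH t (by omega)
      match a, b, c, hsum with
      | a' + 1, b, c, hsum => exact J_step_aux s' IH' a' b c hsum
      | 0, b' + 1, c, hsum =>
        rw [Jraw_comm1]
        have := J_step_aux s' IH' b' 0 c (by omega)
        rw [this]
        by_cases he : Even (s' + 1)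
        · rw [if_pos he, if_pos he]
          exact (Dz_comm1 _ _ _).symm
        · rw [if_neg he, if_neg he]
      | 0, 0, c' + 1, hsum =>
        rw [Jraw_comm2, Jraw_comm1]
        have := J_step_aux s' IH' c' 0 0 (by omega)
        rw [this]
        by_cases he : Even (s' + 1)
        · rw [if_pos he, if_pos he]
          rw [Dz_comm1, Dz_comm2]
          push_cast
          ring_nf
        · rw [if_neg he, if_neg he]

lemma final_step (n m l : ℤ) (h : Odd (n + m + l)) :
    (n:ℝ) * Dz (n-1) m l + (m:ℝ) * Dz n (m-1) l + (l:ℝ) * Dz n m (l-1)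
      = -(ddfact (n + m - l - 2) * ddfact (n - m + l - 2) * ddfact (-n + m + l - 2) *
        ((n:ℝ)^2 + (m:ℝ)^2 + (l:ℝ)^2 - 2*(n:ℝ)*(m:ℝ) - 2*(n:ℝ)*(l:ℝ) - 2*(m:ℝ)*(l:ℝ))) := by
  have hu : Odd (n + m - l) := by obtain ⟨k, hk⟩ := h; exact ⟨k - l, by omega⟩
  have hv : Odd (n - m + l) := by obtain ⟨k, hk⟩ := h; exact ⟨k - m, by omega⟩
  have hw : Odd (-n + m + l) := by obtain ⟨k, hk⟩ := h; exact ⟨k - n, by omega⟩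
  unfold Dz
  rw [show n - 1 + m - l - 1 = n + m - l - 2 by ring,
    show n - 1 - m + l - 1 = n - m + l - 2 by ring,
    show -(n-1) + m + l - 1 = -n + m + l by ring,
    show n + (m-1) - l - 1 = n + m - l - 2 by ring,
    show n - (m-1) + l - 1 = n - m + l by ring,
    show -n + (m-1) + l - 1 = -n + m + l - 2 by ring,
    show n + m - (l-1) - 1 = n + m - l by ring,
    show n - m + (l-1) - 1 = n - m + l - 2 by ring,
    show -n + m + (l-1) - 1 = -n + m + l - 2 by ring,
    ddfact_step hu, ddfact_step hv, ddfact_step hw]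
  push_cast
  ring

theorem I4_one_eq (n m l : ℕ) (h : Odd (n + m + l)) :
    I n m l 1 =
      -(ddfact ((n : ℤ) + m - l - 2) * ddfact ((n : ℤ) - m + l - 2) *
          ddfact (-(n : ℤ) + m + l - 2) *
        ((n : ℝ) ^ 2 + (m : ℝ) ^ 2 + (l : ℝ) ^ 2 - 2 * n * m - 2 * n * l - 2 * m * l)) := by
  have hfun : (fun x : ℝ => hermiteP n x * hermiteP m x * hermiteP l x * hermiteP 1 x
        * Real.exp (-2 * x ^ 2))
      = fun x : ℝ => 2 * x * (hermiteP n x * hermiteP m x * hermiteP l x)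
        * Real.exp (-2 * x ^ 2) := by
    funext x
    show hermiteP n x * hermiteP m x * hermiteP l x * (2 * x) * Real.exp (-2 * x ^ 2) = _
    ring
  have hI : I n m l 1 = Real.sqrt (2 / π) *
      ((n:ℝ) * Jraw (n - 1) m l + (m:ℝ) * Jraw n (m - 1) l + (l:ℝ) * Jraw n m (l - 1)) := by
    unfold I
    rw [hfun, key_raw]
  have t1 : (n:ℝ) * (Real.sqrt (2 / π) * Jraw (n - 1) m l) = (n:ℝ) * Dz ((n:ℤ) - 1) m l := by
    cases n with
    | zero => simp
    | succ n' =>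
      have hev : Even (n' + m + l) := by
        simp only [Nat.odd_iff] at h; simp only [Nat.even_iff]; omega
      have ht := J_eq (n' + m + l) n' m l rfl
      rw [if_pos hev] at ht
      rw [Nat.add_sub_cancel, ht, show ((n' + 1 : ℕ) : ℤ) - 1 = (n' : ℤ) by push_cast; ring]
  have t2 : (m:ℝ) * (Real.sqrt (2 / π) * Jraw n (m - 1) l) = (m:ℝ) * Dz (n:ℤ) ((m:ℤ) - 1) l := by
    cases m with
    | zero => simp
    | succ m' =>
      have hev : Even (n + m' + l) := by
        simp only [Nat.odd_iff] at h; simp only [Nat.even_iff]; omega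
      have ht := J_eq (n + m' + l) n m' l rfl
      rw [if_pos hev] at ht
      rw [Nat.add_sub_cancel, ht, show ((m' + 1 : ℕ) : ℤ) - 1 = (m' : ℤ) by push_cast; ring]
  have t3 : (l:ℝ) * (Real.sqrt (2 / π) * Jraw n m (l - 1)) = (l:ℝ) * Dz (n:ℤ) (m:ℤ) ((l:ℤ) - 1) := by
    cases l with
    | zero => simp
    | succ l' =>
      have hev : Even (n + m + l') := by
        simp only [Nat.odd_iff] at h; simp only [Nat.even_iff]; omega
      have ht := J_eq (n + m + l') n m l' rfl
      rw [if_pos hev] at ht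
      rw [Nat.add_sub_cancel, ht, show ((l' + 1 : ℕ) : ℤ) - 1 = (l' : ℤ) by push_cast; ring]
  have hoddz : Odd ((n:ℤ) + (m:ℤ) + (l:ℤ)) := by
    obtain ⟨k, hk⟩ := h
    exact ⟨(k : ℤ), by exact_mod_cast hk⟩
  have hfs := final_step (n:ℤ) (m:ℤ) (l:ℤ) hoddz
  push_cast at hfs
  rw [hI, mul_add, mul_add]
  rw [show Real.sqrt (2 / π) * ((n:ℝ) * Jraw (n - 1) m l)
      = (n:ℝ) * (Real.sqrt (2 / π) * Jraw (n - 1) m l) by ring,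
    show Real.sqrt (2 / π) * ((m:ℝ) * Jraw n (m - 1) l)
      = (m:ℝ) * (Real.sqrt (2 / π) * Jraw n (m - 1) l) by ring,
    show Real.sqrt (2 / π) * ((l:ℝ) * Jraw n m (l - 1))
      = (l:ℝ) * (Real.sqrt (2 / π) * Jraw n m (l - 1)) by ring,
    t1, t2, t3]
  linarith [hfs]
end

section
/- Let n, m, l, j be natural numbers with n ≥ 2, m ≥ 1, l ≥ 1 and j ≥ 1. Then I_{n,m,l,j} = −(n−1)·I_{n−2,m,l,j} + m·I_{n−1,m−1,l,j} + l·I_{n−1,m,l−1,j} + j·I_{n−1,m,l,j−1}. -/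
open MeasureTheory Real

/-! ### Auxiliary material -/

/-- A function is polynomial. -/
def MyPolyFun (f : ℝ → ℝ) : Prop := ∃ p : Polynomial ℝ, ∀ x, f x = p.eval x

lemma MyPolyFun.mul {f g : ℝ → ℝ} (hf : MyPolyFun f) (hg : MyPolyFun g) :
    MyPolyFun (fun x => f x * g x) := by
  obtain ⟨p, hp⟩ := hf; obtain ⟨q, hq⟩ := hg
  exact ⟨p * q, fun x => by simp [hp, hq]⟩

lemma myPolyFun_hermiteP_pair (n : ℕ) :
    MyPolyFun (hermiteP n) ∧ MyPolyFun (hermiteP (n + 1)) := by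
  induction n with
  | zero =>
    refine ⟨⟨1, fun x => by simp [hermiteP]⟩, ⟨Polynomial.C 2 * Polynomial.X, fun x => by
      simp [hermiteP]⟩⟩
  | succ n ih =>
    refine ⟨ih.2, ?_⟩
    obtain ⟨p, hp⟩ := ih.1
    obtain ⟨q, hq⟩ := ih.2
    exact ⟨Polynomial.C 2 * Polynomial.X * q - Polynomial.C (2 * ((n : ℝ) + 1)) * p,
      fun x => by simp [hermiteP, hp, hq]⟩

lemma myPolyFun_hermiteP (n : ℕ) : MyPolyFun (hermiteP n) := (myPolyFun_hermiteP_pair n).1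

lemma hermiteP_hasDerivAt_pair (n : ℕ) :
    (∀ x, HasDerivAt (hermiteP n) (2 * (n : ℝ) * hermiteP (n - 1) x) x) ∧
    (∀ x, HasDerivAt (hermiteP (n + 1)) (2 * ((n : ℝ) + 1) * hermiteP n x) x) := by
  induction n with
  | zero =>
    constructor
    · intro x
      have h : hermiteP 0 = fun _ : ℝ => (1 : ℝ) := by funext y; simp [hermiteP]
      rw [h]
      simpa using hasDerivAt_const x (1 : ℝ)
    · intro x
      have h : hermiteP 1 = fun y : ℝ => 2 * y := by funext y; simp [hermiteP]
      rw [h]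
      have := (hasDerivAt_id x).const_mul (2 : ℝ)
      refine this.congr_deriv ?_
      simp [hermiteP]
  | succ n ih =>
    constructor
    · intro x
      have hsub : n + 1 - 1 = n := rfl
      rw [hsub]
      push_cast
      exact ih.2 x
    intro x
    have h : hermiteP (n + 2) =
        fun y : ℝ => 2 * y * hermiteP (n + 1) y - 2 * ((n : ℝ) + 1) * hermiteP n y := by
      funext y; simp [hermiteP]
    rw [h]
    have h1 : HasDerivAt (fun y : ℝ => 2 * y) (2 : ℝ) x := by
      simpa using (hasDerivAt_id x).const_mul (2 : ℝ)
    have h2 := (h1.mul (ih.2 x)).sub ((ih.1 x).const_mul (2 * ((n : ℝ) + 1)))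
    refine h2.congr_deriv ?_
    rcases n with _ | k
    · simp [hermiteP]; ring
    · have hrec : hermiteP (k + 2) x =
          2 * x * hermiteP (k + 1) x - 2 * ((k : ℝ) + 1) * hermiteP k x := by
        simp [hermiteP]
      have hsub : (k + 1 : ℕ) - 1 = k := rfl
      rw [hsub]
      push_cast
      rw [hrec]
      ring

lemma hermiteP_hasDerivAt_succ (n : ℕ) (x : ℝ) :
    HasDerivAt (hermiteP (n + 1)) (2 * ((n : ℝ) + 1) * hermiteP n x) x :=
  (hermiteP_hasDerivAt_pair n).2 x

lemma integrable_polyGauss (p : Polynomial ℝ) :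
    Integrable fun x : ℝ => p.eval x * Real.exp (-2 * x ^ 2) := by
  induction p using Polynomial.induction_on' with
  | add p q hp hq => simpa [add_mul, Pi.add_def] using hp.add hq
  | monomial n a =>
    have hn : (-1 : ℝ) < (n : ℝ) := by
      have : (0 : ℝ) ≤ (n : ℝ) := Nat.cast_nonneg n
      linarith
    have h := integrable_rpow_mul_exp_neg_mul_sq (b := 2) (by norm_num) hn
    simp only [Real.rpow_natCast] at h
    have := h.const_mul a
    simpa [Polynomial.eval_monomial, mul_assoc] using this

lemma integrable_myPolyFunGauss {f : ℝ → ℝ} (hf : MyPolyFun f) :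
    Integrable fun x : ℝ => f x * Real.exp (-2 * x ^ 2) := by
  obtain ⟨p, hp⟩ := hf
  exact (integrable_polyGauss p).congr (by filter_upwards with x; rw [hp])

lemma tendsto_polyGauss_atTop (p : Polynomial ℝ) :
    Filter.Tendsto (fun x : ℝ => p.eval x * Real.exp (-2 * x ^ 2)) Filter.atTop (nhds 0) := by
  induction p using Polynomial.induction_on' with
  | add p q hp hq => simpa [add_mul] using hp.add hq
  | monomial n a =>
    apply squeeze_zero_norm' (a := fun x : ℝ => |a| * (x ^ n * Real.exp (-x)))
    · filter_upwards [Filter.eventually_ge_atTop (1 : ℝ)] with x hx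
      have hx0 : (0 : ℝ) ≤ x := by linarith
      have hle : Real.exp (-2 * x ^ 2) ≤ Real.exp (-x) := by
        apply Real.exp_le_exp.2
        nlinarith
      have hxn : (0 : ℝ) ≤ x ^ n := pow_nonneg hx0 n
      calc ‖(Polynomial.monomial n a).eval x * Real.exp (-2 * x ^ 2)‖
          = |a| * (x ^ n * Real.exp (-2 * x ^ 2)) := by
            rw [Polynomial.eval_monomial, Real.norm_eq_abs, abs_mul, abs_mul,
              abs_of_nonneg hxn, abs_of_nonneg (Real.exp_nonneg _), mul_assoc]
        _ ≤ |a| * (x ^ n * Real.exp (-x)) := by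
            apply mul_le_mul_of_nonneg_left _ (abs_nonneg a)
            exact mul_le_mul_of_nonneg_left hle hxn
    · simpa using (tendsto_pow_mul_exp_neg_atTop_nhds_zero n).const_mul |a|

lemma tendsto_myPolyFunGauss_atTop {f : ℝ → ℝ} (hf : MyPolyFun f) :
    Filter.Tendsto (fun x : ℝ => f x * Real.exp (-2 * x ^ 2)) Filter.atTop (nhds 0) := by
  obtain ⟨p, hp⟩ := hf
  have := tendsto_polyGauss_atTop p
  apply this.congr
  intro x; rw [hp]

lemma tendsto_myPolyFunGauss_atBot {f : ℝ → ℝ} (hf : MyPolyFun f) :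
    Filter.Tendsto (fun x : ℝ => f x * Real.exp (-2 * x ^ 2)) Filter.atBot (nhds 0) := by
  obtain ⟨p, hp⟩ := hf
  have h := tendsto_polyGauss_atTop (p.comp (Polynomial.C (-1) * Polynomial.X))
  have h2 := h.comp Filter.tendsto_neg_atBot_atTop
  apply h2.congr
  intro x
  simp [Function.comp, Polynomial.eval_comp, hp, neg_sq]

/-- Integration by parts core: the integral of the derivative of a polynomial
times a Gaussian vanishes. -/
lemma integral_deriv_polyGauss (F F' : ℝ → ℝ) (hd : ∀ x, HasDerivAt F (F' x) x)
    (hF : MyPolyFun F) (hF' : MyPolyFun F') :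
    ∫ x : ℝ, (F' x - 4 * x * F x) * Real.exp (-2 * x ^ 2) = 0 := by
  set G := fun x : ℝ => F x * Real.exp (-2 * x ^ 2) with hGdef
  have hG : ∀ x, HasDerivAt G ((F' x - 4 * x * F x) * Real.exp (-2 * x ^ 2)) x := by
    intro x
    have h1 : HasDerivAt (fun y : ℝ => -2 * y ^ 2) (-2 * (2 * x)) x := by
      simpa using (hasDerivAt_pow 2 x).const_mul (-2 : ℝ)
    have he := h1.exp
    have := (hd x).mul he
    refine this.congr_deriv ?_
    ring
  have hPsub : MyPolyFun (fun x => F' x - 4 * x * F x) := by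
    obtain ⟨p, hp⟩ := hF; obtain ⟨q, hq⟩ := hF'
    exact ⟨q - Polynomial.C 4 * Polynomial.X * p, fun x => by simp [hp, hq]⟩
  have hint : Integrable fun x : ℝ => (F' x - 4 * x * F x) * Real.exp (-2 * x ^ 2) :=
    integrable_myPolyFunGauss hPsub
  have htop : Filter.Tendsto G Filter.atTop (nhds 0) := tendsto_myPolyFunGauss_atTop hF
  have hbot : Filter.Tendsto G Filter.atBot (nhds 0) := tendsto_myPolyFunGauss_atBot hF
  have h1 := integral_Ioi_of_hasDerivAt_of_tendsto' (a := (0 : ℝ))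
    (fun x _ => hG x) hint.integrableOn htop
  have h2 := integral_Iic_of_hasDerivAt_of_tendsto' (a := (0 : ℝ))
    (fun x _ => hG x) hint.integrableOn hbot
  rw [← intervalIntegral.integral_Iic_add_Ioi (b := (0 : ℝ)) hint.integrableOn hint.integrableOn, h1, h2]
  ring

theorem I4_recurrence (n m l j : ℕ) (hn : 2 ≤ n) (hm : 1 ≤ m) (hl : 1 ≤ l) (hj : 1 ≤ j) :
    I n m l j =
      -((n : ℝ) - 1) * I (n - 2) m l j + (m : ℝ) * I (n - 1) (m - 1) l j +
        (l : ℝ) * I (n - 1) m (l - 1) j + (j : ℝ) * I (n - 1) m l (j - 1) := by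
  obtain ⟨a, rfl⟩ : ∃ a, n = a + 2 := ⟨n - 2, by omega⟩
  obtain ⟨b, rfl⟩ : ∃ b, m = b + 1 := ⟨m - 1, by omega⟩
  obtain ⟨c, rfl⟩ : ∃ c, l = c + 1 := ⟨l - 1, by omega⟩
  obtain ⟨d, rfl⟩ : ∃ d, j = d + 1 := ⟨j - 1, by omega⟩
  have hs2 : a + 2 - 2 = a := by omega
  have hs1 : a + 2 - 1 = a + 1 := by omega
  have hsb : b + 1 - 1 = b := by omega
  have hsc : c + 1 - 1 = c := by omega
  have hsd : d + 1 - 1 = d := by omega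
  rw [hs2, hs1, hsb, hsc, hsd]
  -- notation
  set e : ℝ → ℝ := fun x => Real.exp (-2 * x ^ 2) with he
  set F : ℝ → ℝ := fun x =>
    hermiteP (a + 1) x * hermiteP (b + 1) x * hermiteP (c + 1) x * hermiteP (d + 1) x with hF
  set F' : ℝ → ℝ := fun x =>
    2 * ((a : ℝ) + 1) * (hermiteP a x * hermiteP (b + 1) x * hermiteP (c + 1) x *
        hermiteP (d + 1) x) +
      2 * ((b : ℝ) + 1) * (hermiteP (a + 1) x * hermiteP b x * hermiteP (c + 1) x *
        hermiteP (d + 1) x) +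
      2 * ((c : ℝ) + 1) * (hermiteP (a + 1) x * hermiteP (b + 1) x * hermiteP c x *
        hermiteP (d + 1) x) +
      2 * ((d : ℝ) + 1) * (hermiteP (a + 1) x * hermiteP (b + 1) x * hermiteP (c + 1) x *
        hermiteP d x) with hF'
  have hd : ∀ x, HasDerivAt F (F' x) x := by
    intro x
    have h1 := hermiteP_hasDerivAt_succ a x
    have h2 := hermiteP_hasDerivAt_succ b x
    have h3 := hermiteP_hasDerivAt_succ c x
    have h4 := hermiteP_hasDerivAt_succ d x
    have := ((h1.mul h2).mul h3).mul h4
    refine this.congr_deriv ?_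
    simp only [hF', Pi.mul_apply]
    ring
  have hFpoly : MyPolyFun F :=
    ((((myPolyFun_hermiteP (a + 1)).mul (myPolyFun_hermiteP (b + 1))).mul
      (myPolyFun_hermiteP (c + 1))).mul (myPolyFun_hermiteP (d + 1)))
  have hF'poly : MyPolyFun F' := by
    obtain ⟨pa, hpa⟩ := myPolyFun_hermiteP a
    obtain ⟨pa1, hpa1⟩ := myPolyFun_hermiteP (a + 1)
    obtain ⟨pb, hpb⟩ := myPolyFun_hermiteP b
    obtain ⟨pb1, hpb1⟩ := myPolyFun_hermiteP (b + 1)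
    obtain ⟨pc, hpc⟩ := myPolyFun_hermiteP c
    obtain ⟨pc1, hpc1⟩ := myPolyFun_hermiteP (c + 1)
    obtain ⟨pd, hpd⟩ := myPolyFun_hermiteP d
    obtain ⟨pd1, hpd1⟩ := myPolyFun_hermiteP (d + 1)
    refine ⟨Polynomial.C (2 * ((a : ℝ) + 1)) * (pa * pb1 * pc1 * pd1) +
      Polynomial.C (2 * ((b : ℝ) + 1)) * (pa1 * pb * pc1 * pd1) +
      Polynomial.C (2 * ((c : ℝ) + 1)) * (pa1 * pb1 * pc * pd1) +
      Polynomial.C (2 * ((d : ℝ) + 1)) * (pa1 * pb1 * pc1 * pd), fun x => ?_⟩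
    simp [hF', hpa, hpa1, hpb, hpb1, hpc, hpc1, hpd, hpd1]
  have key := integral_deriv_polyGauss F F' hd hFpoly hF'poly
  -- integrability of the pieces
  have hg0 : Integrable fun x : ℝ =>
      hermiteP a x * hermiteP (b + 1) x * hermiteP (c + 1) x * hermiteP (d + 1) x * e x :=
    integrable_myPolyFunGauss ((((myPolyFun_hermiteP a).mul (myPolyFun_hermiteP (b + 1))).mul
      (myPolyFun_hermiteP (c + 1))).mul (myPolyFun_hermiteP (d + 1)))
  have hg1 : Integrable fun x : ℝ =>
      hermiteP (a + 1) x * hermiteP b x * hermiteP (c + 1) x * hermiteP (d + 1) x * e x :=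
    integrable_myPolyFunGauss ((((myPolyFun_hermiteP (a + 1)).mul (myPolyFun_hermiteP b)).mul
      (myPolyFun_hermiteP (c + 1))).mul (myPolyFun_hermiteP (d + 1)))
  have hg2 : Integrable fun x : ℝ =>
      hermiteP (a + 1) x * hermiteP (b + 1) x * hermiteP c x * hermiteP (d + 1) x * e x :=
    integrable_myPolyFunGauss ((((myPolyFun_hermiteP (a + 1)).mul (myPolyFun_hermiteP (b + 1))).mul
      (myPolyFun_hermiteP c)).mul (myPolyFun_hermiteP (d + 1)))
  have hg3 : Integrable fun x : ℝ =>
      hermiteP (a + 1) x * hermiteP (b + 1) x * hermiteP (c + 1) x * hermiteP d x * e x :=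
    integrable_myPolyFunGauss ((((myPolyFun_hermiteP (a + 1)).mul (myPolyFun_hermiteP (b + 1))).mul
      (myPolyFun_hermiteP (c + 1))).mul (myPolyFun_hermiteP d))
  have hK : Integrable fun x : ℝ => (F' x - 4 * x * F x) * e x := by
    apply integrable_myPolyFunGauss
    obtain ⟨p, hp⟩ := hFpoly; obtain ⟨q, hq⟩ := hF'poly
    exact ⟨q - Polynomial.C 4 * Polynomial.X * p, fun x => by simp [hp, hq]⟩
  -- pointwise identity
  have hpt : ∀ x : ℝ,
      hermiteP (a + 2) x * hermiteP (b + 1) x * hermiteP (c + 1) x * hermiteP (d + 1) x * e x =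
      (-((a : ℝ) + 1) *
          (hermiteP a x * hermiteP (b + 1) x * hermiteP (c + 1) x * hermiteP (d + 1) x * e x) +
        ((b : ℝ) + 1) *
          (hermiteP (a + 1) x * hermiteP b x * hermiteP (c + 1) x * hermiteP (d + 1) x * e x) +
        ((c : ℝ) + 1) *
          (hermiteP (a + 1) x * hermiteP (b + 1) x * hermiteP c x * hermiteP (d + 1) x * e x) +
        ((d : ℝ) + 1) *
          (hermiteP (a + 1) x * hermiteP (b + 1) x * hermiteP (c + 1) x * hermiteP d x * e x)) -
        (1 / 2) * ((F' x - 4 * x * F x) * e x) := by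
    intro x
    have hrec : hermiteP (a + 2) x =
        2 * x * hermiteP (a + 1) x - 2 * ((a : ℝ) + 1) * hermiteP a x := by
      simp [hermiteP]
    rw [hrec]
    simp only [hF, hF']
    ring
  -- integral computation
  have hint : (∫ x : ℝ, hermiteP (a + 2) x * hermiteP (b + 1) x * hermiteP (c + 1) x *
        hermiteP (d + 1) x * e x) =
      -((a : ℝ) + 1) * (∫ x : ℝ, hermiteP a x * hermiteP (b + 1) x * hermiteP (c + 1) x *
          hermiteP (d + 1) x * e x) +
        ((b : ℝ) + 1) * (∫ x : ℝ, hermiteP (a + 1) x * hermiteP b x * hermiteP (c + 1) x *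
          hermiteP (d + 1) x * e x) +
        ((c : ℝ) + 1) * (∫ x : ℝ, hermiteP (a + 1) x * hermiteP (b + 1) x * hermiteP c x *
          hermiteP (d + 1) x * e x) +
        ((d : ℝ) + 1) * (∫ x : ℝ, hermiteP (a + 1) x * hermiteP (b + 1) x * hermiteP (c + 1) x *
          hermiteP d x * e x) := by
    have h1 : (∫ x : ℝ, hermiteP (a + 2) x * hermiteP (b + 1) x * hermiteP (c + 1) x *
        hermiteP (d + 1) x * e x) =
        ∫ x : ℝ, ((-((a : ℝ) + 1) *
          (hermiteP a x * hermiteP (b + 1) x * hermiteP (c + 1) x * hermiteP (d + 1) x * e x) +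
        ((b : ℝ) + 1) *
          (hermiteP (a + 1) x * hermiteP b x * hermiteP (c + 1) x * hermiteP (d + 1) x * e x) +
        ((c : ℝ) + 1) *
          (hermiteP (a + 1) x * hermiteP (b + 1) x * hermiteP c x * hermiteP (d + 1) x * e x) +
        ((d : ℝ) + 1) *
          (hermiteP (a + 1) x * hermiteP (b + 1) x * hermiteP (c + 1) x * hermiteP d x * e x)) -
        (1 / 2) * ((F' x - 4 * x * F x) * e x)) := by
      apply integral_congr_ae
      filter_upwards with x
      exact hpt x
    rw [h1]
    have hRint : Integrable fun x : ℝ => (-((a : ℝ) + 1) *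
          (hermiteP a x * hermiteP (b + 1) x * hermiteP (c + 1) x * hermiteP (d + 1) x * e x) +
        ((b : ℝ) + 1) *
          (hermiteP (a + 1) x * hermiteP b x * hermiteP (c + 1) x * hermiteP (d + 1) x * e x) +
        ((c : ℝ) + 1) *
          (hermiteP (a + 1) x * hermiteP (b + 1) x * hermiteP c x * hermiteP (d + 1) x * e x) +
        ((d : ℝ) + 1) *
          (hermiteP (a + 1) x * hermiteP (b + 1) x * hermiteP (c + 1) x * hermiteP d x * e x)) :=
      (((hg0.const_mul _).add (hg1.const_mul _)).add (hg2.const_mul _)).add (hg3.const_mul _)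
    rw [integral_sub hRint (hK.const_mul _)]
    rw [integral_const_mul]
    have hkey2 : (∫ x : ℝ, (F' x - 4 * x * F x) * e x) = 0 := key
    rw [hkey2]
    have e1 : (∫ x : ℝ, (-((a : ℝ) + 1) *
          (hermiteP a x * hermiteP (b + 1) x * hermiteP (c + 1) x * hermiteP (d + 1) x * e x) +
        ((b : ℝ) + 1) *
          (hermiteP (a + 1) x * hermiteP b x * hermiteP (c + 1) x * hermiteP (d + 1) x * e x) +
        ((c : ℝ) + 1) *
          (hermiteP (a + 1) x * hermiteP (b + 1) x * hermiteP c x * hermiteP (d + 1) x * e x) +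
        ((d : ℝ) + 1) *
          (hermiteP (a + 1) x * hermiteP (b + 1) x * hermiteP (c + 1) x * hermiteP d x * e x))) =
        (∫ x : ℝ, (-((a : ℝ) + 1) *
          (hermiteP a x * hermiteP (b + 1) x * hermiteP (c + 1) x * hermiteP (d + 1) x * e x))) +
        (∫ x : ℝ, ((b : ℝ) + 1) *
          (hermiteP (a + 1) x * hermiteP b x * hermiteP (c + 1) x * hermiteP (d + 1) x * e x)) +
        (∫ x : ℝ, ((c : ℝ) + 1) *
          (hermiteP (a + 1) x * hermiteP (b + 1) x * hermiteP c x * hermiteP (d + 1) x * e x)) +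
        (∫ x : ℝ, ((d : ℝ) + 1) *
          (hermiteP (a + 1) x * hermiteP (b + 1) x * hermiteP (c + 1) x * hermiteP d x * e x)) := by
      have hi0 : Integrable (fun x : ℝ => -((a : ℝ) + 1) *
          (hermiteP a x * hermiteP (b + 1) x * hermiteP (c + 1) x * hermiteP (d + 1) x * e x)) :=
        hg0.const_mul _
      have hi1 : Integrable (fun x : ℝ => ((b : ℝ) + 1) *
          (hermiteP (a + 1) x * hermiteP b x * hermiteP (c + 1) x * hermiteP (d + 1) x * e x)) :=
        hg1.const_mul _
      have hi2 : Integrable (fun x : ℝ => ((c : ℝ) + 1) *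
          (hermiteP (a + 1) x * hermiteP (b + 1) x * hermiteP c x * hermiteP (d + 1) x * e x)) :=
        hg2.const_mul _
      have hi3 : Integrable (fun x : ℝ => ((d : ℝ) + 1) *
          (hermiteP (a + 1) x * hermiteP (b + 1) x * hermiteP (c + 1) x * hermiteP d x * e x)) :=
        hg3.const_mul _
      have hi01 : Integrable (fun x : ℝ => -((a : ℝ) + 1) *
          (hermiteP a x * hermiteP (b + 1) x * hermiteP (c + 1) x * hermiteP (d + 1) x * e x) +
          ((b : ℝ) + 1) *
          (hermiteP (a + 1) x * hermiteP b x * hermiteP (c + 1) x * hermiteP (d + 1) x * e x)) :=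
        hi0.add hi1
      have hi012 : Integrable (fun x : ℝ => -((a : ℝ) + 1) *
          (hermiteP a x * hermiteP (b + 1) x * hermiteP (c + 1) x * hermiteP (d + 1) x * e x) +
          ((b : ℝ) + 1) *
          (hermiteP (a + 1) x * hermiteP b x * hermiteP (c + 1) x * hermiteP (d + 1) x * e x) +
          ((c : ℝ) + 1) *
          (hermiteP (a + 1) x * hermiteP (b + 1) x * hermiteP c x * hermiteP (d + 1) x * e x)) :=
        hi01.add hi2
      rw [integral_add hi012 hi3, integral_add hi01 hi2, integral_add hi0 hi1]
    rw [e1, integral_const_mul, integral_const_mul, integral_const_mul, integral_const_mul]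
    ring
  simp only [I]
  rw [hint]
  push_cast
  ring
end
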